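/- Let n ≥ 1 be a natural number and let u : [0,∞) → ℝ be twice differentiable with u(r) > 0 for all r ≥ 0, strictly decreasing, satisfying u''(r) + ((n-1)/r) u'(r) + f(u(r)) = 0 for all r > 0, with u'(0) = 0, and such that P(r) = r^n (u'(r)² + 2F(u(r))) + (n-2) r^{n-1} u(r) u'(r) tends to 0 as r → ∞. Assume B > 0 satisfies Σ(v) < 0 for all v ∈ (0,B), Σ(v) > 0 for all v ∈ (B, u(0)], and B < u(0). Then P(r) > 0 for all r > 0. -/

import Mathlib

/-- The double power nonlinearity `f(u) = -ω u + u^p - u^q`. -/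
noncomputable def f (ω p q u : ℝ) : ℝ := -ω * u + u ^ p - u ^ q

/-- The primitive `F(u) = -(ω/2)u² + u^{p+1}/(p+1) - u^{q+1}/(q+1)`. -/
noncomputable def F (ω p q u : ℝ) : ℝ :=
  -(ω / 2) * u ^ 2 + u ^ (p + 1) / (p + 1) - u ^ (q + 1) / (q + 1)

/-- The Pohozaev polynomial `Σ(u) = 2nF(u) - (n-2)u f(u)`. -/
noncomputable def Sig (n : ℕ) (ω p q u : ℝ) : ℝ :=
  2 * n * F ω p q u - ((n : ℝ) - 2) * u * f ω p q u

/-- The Pohozaev function `P(r) = rⁿ(u'(r)² + 2F(u(r))) + (n-2)r^{n-1}u(r)u'(r)`. -/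
noncomputable def P (n : ℕ) (ω p q : ℝ) (u u' : ℝ → ℝ) (r : ℝ) : ℝ :=
  r ^ (n : ℝ) * ((u' r) ^ 2 + 2 * F ω p q (u r)) +
    ((n : ℝ) - 2) * r ^ ((n : ℝ) - 1) * u r * u' r

lemma hasDerivAt_F (ω p q v : ℝ) (hp : 1 < p) (hq : 1 < q) (hv : 0 < v) :
    HasDerivAt (F ω p q) (f ω p q v) v := by
  have h1 : HasDerivAt (fun x : ℝ => x ^ 2) (2 * v) v := by
    simpa using hasDerivAt_pow 2 v
  have h2 : HasDerivAt (fun x : ℝ => x ^ (p + 1)) ((p + 1) * v ^ p) v := by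
    have := Real.hasDerivAt_rpow_const (x := v) (p := p + 1) (Or.inl hv.ne')
    simpa using this
  have h3 : HasDerivAt (fun x : ℝ => x ^ (q + 1)) ((q + 1) * v ^ q) v := by
    have := Real.hasDerivAt_rpow_const (x := v) (p := q + 1) (Or.inl hv.ne')
    simpa using this
  have : HasDerivAt (F ω p q)
      (-(ω / 2) * (2 * v) + (p + 1) * v ^ p / (p + 1) - (q + 1) * v ^ q / (q + 1)) v := by
    exact ((h1.const_mul (-(ω / 2))).add (h2.div_const (p + 1))).sub (h3.div_const (q + 1))
  convert this using 1
  have hp1 : p + 1 ≠ 0 := by linarith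
  have hq1 : q + 1 ≠ 0 := by linarith
  unfold f
  field_simp

lemma hasDerivAt_P (p q ω : ℝ) (hp : 1 < p) (hpq : p < q)
    (n : ℕ) (u u' u'' : ℝ → ℝ)
    (hu : ∀ r, 0 ≤ r → HasDerivAt u (u' r) r)
    (hu' : ∀ r, 0 ≤ r → HasDerivAt u' (u'' r) r)
    (hupos : ∀ r, 0 ≤ r → 0 < u r)
    (hode : ∀ r, 0 < r → u'' r + ((n : ℝ) - 1) / r * u' r + f ω p q (u r) = 0)
    (r : ℝ) (hr : 0 < r) :
    HasDerivAt (P n ω p q u u') (r ^ ((n : ℝ) - 1) * Sig n ω p q (u r)) r := by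
  have hq : 1 < q := lt_trans hp hpq
  have hA : HasDerivAt (fun x : ℝ => x ^ (n : ℝ)) ((n : ℝ) * r ^ ((n : ℝ) - 1)) r :=
    Real.hasDerivAt_rpow_const (Or.inl hr.ne')
  have hA' : HasDerivAt (fun x : ℝ => x ^ ((n : ℝ) - 1)) (((n : ℝ) - 1) * r ^ ((n : ℝ) - 1 - 1)) r :=
    Real.hasDerivAt_rpow_const (Or.inl hr.ne')
  have hFu : HasDerivAt (fun x => F ω p q (u x)) (f ω p q (u r) * u' r) r :=
    (hasDerivAt_F ω p q (u r) hp hq (hupos r hr.le)).comp r (hu r hr.le)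
  have hG : HasDerivAt (fun x => (u' x) ^ 2 + 2 * F ω p q (u x))
      (2 * u' r * u'' r + 2 * (f ω p q (u r) * u' r)) r := by
    have := ((hu' r hr.le).pow 2).add (hFu.const_mul 2)
    simpa [mul_comm, mul_assoc, Pi.add_def, Pi.pow_def] using this
  have h1 : HasDerivAt (fun x => x ^ (n : ℝ) * ((u' x) ^ 2 + 2 * F ω p q (u x)))
      ((n : ℝ) * r ^ ((n : ℝ) - 1) * ((u' r) ^ 2 + 2 * F ω p q (u r)) +
        r ^ (n : ℝ) * (2 * u' r * u'' r + 2 * (f ω p q (u r) * u' r))) r := hA.mul hG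
  have huu' : HasDerivAt (fun x => u x * u' x) (u' r * u' r + u r * u'' r) r :=
    (hu r hr.le).mul (hu' r hr.le)
  have hc : HasDerivAt (fun x : ℝ => ((n : ℝ) - 2) * x ^ ((n : ℝ) - 1))
      (((n : ℝ) - 2) * (((n : ℝ) - 1) * r ^ ((n : ℝ) - 1 - 1))) r := hA'.const_mul _
  have h2 : HasDerivAt (fun x => ((n : ℝ) - 2) * x ^ ((n : ℝ) - 1) * u x * u' x) _ r :=
    ((hc.mul (hu r hr.le)).mul (hu' r hr.le))
  have hP : HasDerivAt (P n ω p q u u') _ r := h1.add h2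
  convert hP using 1
  simp only [Pi.mul_apply]
  have hu''eq : u'' r = -(((n : ℝ) - 1) / r * u' r) - f ω p q (u r) := by
    have := hode r hr; linarith
  have e1 : r ^ (n : ℝ) = r ^ ((n : ℝ) - 1) * r := by
    rw [← Real.rpow_add_one hr.ne']; ring_nf
  have e2 : r ^ ((n : ℝ) - 1 - 1) = r ^ ((n : ℝ) - 1) / r := by
    rw [eq_div_iff hr.ne', ← Real.rpow_add_one hr.ne']; ring_nf
  rw [hu''eq, e1, e2]
  unfold Sig
  field_simp
  ring

/-- Corollary: under the hypotheses of Theorem 2, if moreover `Σ > 0` on `(B, u(0)]`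
and `B < u(0)`, then `P(r) > 0` for all `r > 0`. -/
theorem P_pos (p q ω : ℝ) (hp : 1 < p) (hpq : p < q) (hω : 0 < ω)
    (n : ℕ) (hn : 1 ≤ n) (u u' u'' : ℝ → ℝ)
    (hu : ∀ r, 0 ≤ r → HasDerivAt u (u' r) r)
    (hu' : ∀ r, 0 ≤ r → HasDerivAt u' (u'' r) r)
    (hupos : ∀ r, 0 ≤ r → 0 < u r)
    (hdec : StrictAntiOn u (Set.Ici (0 : ℝ)))
    (hode : ∀ r, 0 < r → u'' r + ((n : ℝ) - 1) / r * u' r + f ω p q (u r) = 0)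
    (hu'0 : u' 0 = 0)
    (hPlim : Filter.Tendsto (P n ω p q u u') Filter.atTop (nhds 0))
    (B : ℝ) (hB : 0 < B)
    (hSigNeg : ∀ v, 0 < v → v < B → Sig n ω p q v < 0)
    (hSigPos : ∀ v, B < v → v ≤ u 0 → 0 < Sig n ω p q v)
    (hBu : B < u 0) :
    ∀ r, 0 < r → 0 < P n ω p q u u' r := by
  have hq : 1 < q := hp.trans hpq
  have hn0 : ((n : ℕ) : ℝ) ≠ 0 := by
    exact_mod_cast Nat.one_le_iff_ne_zero.mp hn
  have hn1 : (0 : ℝ) ≤ (n : ℝ) - 1 := by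
    have : (1 : ℝ) ≤ (n : ℝ) := by exact_mod_cast hn
    linarith
  have hPderiv : ∀ x, 0 < x →
      HasDerivAt (P n ω p q u u') (x ^ ((n : ℝ) - 1) * Sig n ω p q (u x)) x :=
    fun x hx => hasDerivAt_P p q ω hp hpq n u u' u'' hu hu' hupos hode x hx
  have hP0 : P n ω p q u u' 0 = 0 := by
    simp [P, hu'0, Real.zero_rpow hn0]
  have hPc : ∀ x, 0 ≤ x → ContinuousAt (P n ω p q u u') x := by
    intro x hx
    have c1 : ContinuousAt (fun y : ℝ => y ^ (n : ℝ)) x :=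
      Real.continuousAt_rpow_const x _ (Or.inr (by positivity))
    have c2 : ContinuousAt (fun y : ℝ => y ^ ((n : ℝ) - 1)) x :=
      Real.continuousAt_rpow_const x _ (Or.inr hn1)
    have cu := (hu x hx).continuousAt
    have cu' := (hu' x hx).continuousAt
    have cF : ContinuousAt (fun y => F ω p q (u y)) x :=
      ((hasDerivAt_F ω p q (u x) hp hq (hupos x hx)).continuousAt).comp cu
    unfold P
    exact (c1.mul ((cu'.pow 2).add (cF.const_mul 2))).add
      (((c2.const_mul _).mul cu).mul cu')
  -- derivative positive when B < u x ≤ u 0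
  have hderivPos : ∀ x, 0 < x → B < u x → 0 < deriv (P n ω p q u u') x := by
    intro x hx hBx
    rw [(hPderiv x hx).deriv]
    have hux : u x ≤ u 0 := (hdec (Set.self_mem_Ici) (Set.mem_Ici.mpr hx.le) hx).le
    exact mul_pos (Real.rpow_pos_of_pos hx _) (hSigPos _ hBx hux)
  have hderivNeg : ∀ x, 0 < x → u x < B → deriv (P n ω p q u u') x < 0 := by
    intro x hx hBx
    rw [(hPderiv x hx).deriv]
    exact mul_neg_of_pos_of_neg (Real.rpow_pos_of_pos hx _)
      (hSigNeg _ (hupos x hx.le) hBx)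
  intro r hr
  by_cases hS : ∃ s, 0 ≤ s ∧ u s ≤ B
  · obtain ⟨s₀, hs₀⟩ := hS
    set S : Set ℝ := {s | 0 ≤ s ∧ u s ≤ B} with hSdef
    have hne : S.Nonempty := ⟨s₀, hs₀⟩
    have hbdd : BddBelow S := ⟨0, fun s hs => hs.1⟩
    set R0 := sInf S with hR0def
    have hR0nonneg : 0 ≤ R0 := le_csInf hne fun s hs => hs.1
    have hlt : ∀ x, 0 ≤ x → x < R0 → B < u x := by
      intro x hx hxR
      by_contra h
      push_neg at h
      exact absurd (csInf_le hbdd ⟨hx, h⟩) (not_le.mpr hxR)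
    have huR0 : u R0 ≤ B := by
      by_contra h
      push_neg at h
      obtain ⟨ε, hε, hball⟩ := Metric.continuousAt_iff.mp
        (hu R0 hR0nonneg).continuousAt (u R0 - B) (by linarith)
      obtain ⟨s, hsS, hslt⟩ := exists_lt_of_csInf_lt hne (by linarith : R0 < R0 + ε)
      have hs1 : R0 ≤ s := csInf_le hbdd hsS
      have : |u s - u R0| < u R0 - B := by
        apply hball
        rw [Real.dist_eq]
        rw [abs_lt]; constructor <;> [linarith; linarith]
      have := abs_lt.mp this
      have := hsS.2
      linarith
    have hR0pos : 0 < R0 := by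
      rcases hR0nonneg.lt_or_eq with h | h
      · exact h
      · exfalso; rw [← h] at huR0; linarith
    rcases le_or_gt r R0 with hrR | hrR
    · -- P strictly increasing on [0, R0]
      have hmono : StrictMonoOn (P n ω p q u u') (Set.Icc 0 R0) := by
        apply strictMonoOn_of_deriv_pos (convex_Icc 0 R0)
        · exact fun x hx => (hPc x hx.1).continuousWithinAt
        · intro x hx
          rw [interior_Icc] at hx
          exact hderivPos x hx.1 (hlt x hx.1.le hx.2)
      have := hmono (Set.mem_Icc.mpr ⟨le_refl 0, hR0pos.le⟩)
        (Set.mem_Icc.mpr ⟨hr.le, hrR⟩) hr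
      rwa [hP0] at this
    · -- P strictly decreasing on [R0, ∞), tends to 0
      have hanti : StrictAntiOn (P n ω p q u u') (Set.Ici R0) := by
        apply strictAntiOn_of_deriv_neg (convex_Ici R0)
        · exact fun x hx => (hPc x (hR0nonneg.trans hx)).continuousWithinAt
        · intro x hx
          rw [interior_Ici] at hx
          have : u x < u R0 :=
            hdec (Set.mem_Ici.mpr hR0nonneg) (Set.mem_Ici.mpr (hR0nonneg.trans hx.le)) hx
          exact hderivNeg x (hR0pos.trans hx) (lt_of_lt_of_le this huR0)
      have h1 : P n ω p q u u' (r + 1) < P n ω p q u u' r :=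
        hanti (Set.mem_Ici.mpr hrR.le) (Set.mem_Ici.mpr (by linarith)) (by linarith)
      have h2 : 0 ≤ P n ω p q u u' (r + 1) := by
        apply le_of_tendsto hPlim
        filter_upwards [Filter.eventually_ge_atTop (r + 1)] with s hs
        exact hanti.antitoneOn (Set.mem_Ici.mpr (by linarith)) (Set.mem_Ici.mpr (by linarith)) hs
      linarith
  · push_neg at hS
    have hmono : StrictMonoOn (P n ω p q u u') (Set.Icc 0 r) := by
      apply strictMonoOn_of_deriv_pos (convex_Icc 0 r)
      · exact fun x hx => (hPc x hx.1).continuousWithinAt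
      · intro x hx
        rw [interior_Icc] at hx
        exact hderivPos x hx.1 (hS x hx.1.le)
    have := hmono (Set.mem_Icc.mpr ⟨le_refl 0, hr.le⟩)
      (Set.mem_Icc.mpr ⟨hr.le, le_refl r⟩) hr
    rwa [hP0] at this
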